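/- Let P be a nonempty polyhedron in ℝⁿ with dim P = m ≤ n. Then there exist orthonormal vectors n_1, …, n_{n−m} ∈ ℝⁿ, scalars s_1, …, s_{n−m} ∈ ℝ, vectors q_1, …, q_M ∈ span{n_1,…,n_{n−m}}^⊥ = V(P), and scalars r_1, …, r_M ∈ ℝ such that: (a) the affine span of P equals ⋂_{i=1}^{n−m} {x ∈ ℝⁿ : ⟨n_i, x⟩ = s_i} (equal to ℝⁿ when m = n), and (b) P = {x ∈ affine span of P : ⟨q_j, x⟩ ≥ r_j for all j = 1, …, M}. -/

import Mathlib

open scoped RealInnerProductSpace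

noncomputable section

/-- A polyhedron in `ℝⁿ` is a finite intersection of closed half-spaces. -/
def IsPolyhedron {n : ℕ} (P : Set (EuclideanSpace ℝ (Fin n))) : Prop :=
  ∃ (N : ℕ) (q : Fin N → EuclideanSpace ℝ (Fin n)) (r : Fin N → ℝ),
    P = {y | ∀ j, r j ≤ ⟪q j, y⟫}

/-- The direction space `V(A) = span {x - y : x, y ∈ A}` of a set `A ⊆ ℝⁿ`. -/
def dirSpan {n : ℕ} (A : Set (EuclideanSpace ℝ (Fin n))) :
    Submodule ℝ (EuclideanSpace ℝ (Fin n)) :=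
  Submodule.span ℝ {v | ∃ x ∈ A, ∃ y ∈ A, v = x - y}

lemma mem_orthogonal_span_aux {E : Type*} [NormedAddCommGroup E] [InnerProductSpace ℝ E]
    {S : Set E} {x : E} : x ∈ (Submodule.span ℝ S)ᗮ ↔ ∀ u ∈ S, ⟪u, x⟫ = 0 := by
  constructor
  · intro h u hu
    exact h u (Submodule.subset_span hu)
  · intro h v hv
    induction hv using Submodule.span_induction with
    | mem u hu => exact h u hu
    | zero => simp
    | add u w _ _ hu hw => simp [inner_add_left, hu, hw]
    | smul c u _ hu => simp [inner_smul_left, hu]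

lemma dirSpan_eq_vectorSpan {n : ℕ} (P : Set (EuclideanSpace ℝ (Fin n))) :
    dirSpan P = vectorSpan ℝ P := by
  unfold dirSpan vectorSpan
  congr 1
  ext v
  simp only [Set.mem_setOf_eq, Set.mem_vsub]
  constructor
  · rintro ⟨x, hx, y, hy, rfl⟩; exact ⟨x, hx, y, hy, rfl⟩
  · rintro ⟨x, hx, y, hy, rfl⟩; exact ⟨x, hx, y, hy, rfl⟩

/-- Splitting of the generator of a low-dimensional polyhedron: a nonempty polyhedron `P`
of dimension `m ≤ n` is cut out, inside its affine span, by half-spaces whose normals lie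
in `V(P)`, while the affine span itself is cut out by `n - m` orthonormal hyperplane
normals whose orthogonal complement is `V(P)`. -/
theorem stmt4 {n : ℕ} (P : Set (EuclideanSpace ℝ (Fin n))) (m : ℕ)
    (hP : IsPolyhedron P) (hne : P.Nonempty)
    (hm : Module.finrank ℝ ↥(dirSpan P) = m) (hmn : m ≤ n) :
    ∃ (nv : Fin (n - m) → EuclideanSpace ℝ (Fin n)) (s : Fin (n - m) → ℝ)
      (M : ℕ) (q : Fin M → EuclideanSpace ℝ (Fin n)) (r : Fin M → ℝ),
      Orthonormal ℝ nv ∧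
      (Submodule.span ℝ (Set.range nv))ᗮ = dirSpan P ∧
      (∀ j, q j ∈ (Submodule.span ℝ (Set.range nv))ᗮ) ∧
      (affineSpan ℝ P : Set (EuclideanSpace ℝ (Fin n))) = ⋂ i, {x | ⟪nv i, x⟫ = s i} ∧
      P = {x ∈ (affineSpan ℝ P : Set (EuclideanSpace ℝ (Fin n))) |
            ∀ j, r j ≤ ⟪q j, x⟫} := by
  classical
  set V : Submodule ℝ (EuclideanSpace ℝ (Fin n)) := dirSpan P with hV
  -- dimension of the orthogonal complement
  have hdim : Module.finrank ℝ ↥Vᗮ = n - m := by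
    have h1 := V.finrank_add_finrank_orthogonal
    rw [hm, finrank_euclideanSpace_fin] at h1
    omega
  -- orthonormal basis of Vᗮ
  let b : OrthonormalBasis (Fin (n - m)) ℝ ↥Vᗮ :=
    (stdOrthonormalBasis ℝ ↥Vᗮ).reindex (finCongr hdim)
  let nv : Fin (n - m) → EuclideanSpace ℝ (Fin n) := fun i => (b i : EuclideanSpace ℝ (Fin n))
  have hnv_on : Orthonormal ℝ nv := b.orthonormal.comp_linearIsometry Vᗮ.subtypeₗᵢ
  have hspan : Submodule.span ℝ (Set.range nv) = Vᗮ := by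
    have hrange : Set.range nv = (Vᗮ.subtype) '' Set.range b := by
      ext x
      simp [nv, Set.range_comp]
    rw [hrange, ← Submodule.map_span, show Submodule.span ℝ (Set.range ⇑b) = ⊤ by
      simpa [OrthonormalBasis.coe_toBasis] using b.toBasis.span_eq]
    exact Submodule.map_subtype_top Vᗮ
  have horth : (Submodule.span ℝ (Set.range nv))ᗮ = V := by
    rw [hspan, Submodule.orthogonal_orthogonal]
  obtain ⟨a, ha⟩ := hne
  have haff : ∀ x : EuclideanSpace ℝ (Fin n), x ∈ affineSpan ℝ P ↔ x - a ∈ V := by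
    intro x
    rw [hV, dirSpan_eq_vectorSpan, ← direction_affineSpan ℝ P]
    exact (AffineSubspace.vsub_right_mem_direction_iff_mem
      (mem_affineSpan ℝ ha) x).symm
  -- part (a)
  set s : Fin (n - m) → ℝ := fun i => ⟪nv i, a⟫ with hs
  have haffeq : (affineSpan ℝ P : Set (EuclideanSpace ℝ (Fin n))) = ⋂ i, {x | ⟪nv i, x⟫ = s i} := by
    ext x
    rw [SetLike.mem_coe, haff x, ← horth, mem_orthogonal_span_aux]
    simp only [Set.mem_iInter, Set.mem_setOf_eq]
    constructor
    · intro h i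
      have := h (nv i) ⟨i, rfl⟩
      rw [inner_sub_right, sub_eq_zero] at this
      exact this
    · rintro h u ⟨i, rfl⟩
      rw [inner_sub_right, sub_eq_zero]
      exact h i
  -- part (b)
  obtain ⟨N, q0, r0, hPeq⟩ := hP
  set q : Fin N → EuclideanSpace ℝ (Fin n) := fun j => (V.orthogonalProjectionOnto (q0 j) : EuclideanSpace ℝ (Fin n)) with hq
  set r : Fin N → ℝ := fun j => r0 j - ⟪q0 j - q j, a⟫ with hr
  have hqmem : ∀ j, q j ∈ V := fun j => SetLike.coe_mem _
  have hkey : ∀ j, ∀ x ∈ affineSpan ℝ P, ⟪q0 j, x⟫ = ⟪q j, x⟫ + ⟪q0 j - q j, a⟫ := by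
    intro j x hx
    have hxa : x - a ∈ V := (haff x).mp hx
    have hperp : q0 j - q j ∈ Vᗮ := Submodule.sub_starProjection_mem_orthogonal (K := V) (q0 j)
    have h0 : ⟪q0 j - q j, x - a⟫ = 0 :=
      Submodule.inner_left_of_mem_orthogonal hxa hperp
    have : ⟪q0 j - q j, x⟫ = ⟪q0 j - q j, a⟫ := by
      rw [inner_sub_right] at h0
      linarith
    rw [show (⟪q0 j, x⟫ : ℝ) = ⟪q j, x⟫ + ⟪q0 j - q j, x⟫ by
      rw [inner_sub_left]; ring, this]
  refine ⟨nv, s, N, q, r, hnv_on, horth.trans hV.symm, fun j => horth ▸ hqmem j,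
    haffeq, ?_⟩
  ext x
  simp only [Set.mem_setOf_eq, SetLike.mem_coe]
  constructor
  · intro hx
    have hxa : x ∈ affineSpan ℝ P := subset_affineSpan ℝ P hx
    refine ⟨hxa, fun j => ?_⟩
    have h1 : r0 j ≤ ⟪q0 j, x⟫ := by rw [hPeq] at hx; exact hx j
    rw [hkey j x hxa] at h1
    simp only [hr]
    linarith
  · rintro ⟨hxa, hx⟩
    rw [hPeq]
    intro j
    have h1 := hx j
    rw [hkey j x hxa]
    simp only [hr] at h1
    linarith
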